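/- Let A be a simple Artinian ring and M a finitely generated semisimple A-module. Then the natural map from A to the endomorphism ring of M viewed as a module over End_A(M) is an isomorphism (double centralizer theorem for semisimple modules). -/

import Mathlib

section aux

variable {A M : Type*} [Ring A] [AddCommGroup M] [Module A M]

/-- Key commutation lemma: an `End_A M`-linear endomorphism `g` of `M`, applied
componentwise to `Fin n → M`, commutes with every `A`-linear endomorphism of
`Fin n → M`. -/
lemma key_comm {n : ℕ} (g : M →ₗ[Module.End A M] M)
    (φ : (Fin n → M) →ₗ[A] (Fin n → M)) (x : Fin n → M) (i : Fin n) :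
    g ((φ x) i) = (φ (fun j => g (x j))) i := by
  classical
  have expand : ∀ (y : Fin n → M) (i : Fin n),
      (φ y) i = ∑ j : Fin n, ((LinearMap.proj i) ∘ₗ φ ∘ₗ
        (LinearMap.single A (fun _ : Fin n => M) j)) (y j) := by
    intro y i
    have hy : y = ∑ j : Fin n, Pi.single j (y j) := by
      funext k
      rw [Finset.sum_apply]
      simp [Pi.single_apply]
    conv_lhs => rw [hy]
    rw [map_sum]
    simp [LinearMap.coe_single]
  rw [expand x i, expand (fun j => g (x j)) i, map_sum]
  refine Finset.sum_congr rfl fun j _ => ?_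
  set f : Module.End A M := (LinearMap.proj i) ∘ₗ φ ∘ₗ
    (LinearMap.single A (fun _ : Fin n => M) j)
  have : g (f • x j) = f • g (x j) := g.map_smul f (x j)
  simpa [Module.End.smul_def] using this

/-- A finite power of a semisimple module is semisimple. -/
lemma pi_semisimple [IsSemisimpleModule A M] (n : ℕ) :
    IsSemisimpleModule A (Fin n → M) :=
  isSemisimpleModule_of_isSemisimpleModule_submodule'
    (p := fun i : Fin n => LinearMap.range (LinearMap.single A (fun _ : Fin n => M) i))
    (fun _ => .range _)
    (by simp_rw [LinearMap.range_eq_map, Submodule.iSup_map_single, Submodule.pi_top])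

end aux

/-- Double Centralizer Theorem for semisimple modules: if `A` is a simple Artinian
ring and `M` a nonzero finitely generated semisimple `A`-module, then the natural
map `A → End_{End_A(M)}(M)` is bijective. -/
theorem stmt2 (A M : Type*) [Ring A] [IsSimpleRing A] [IsArtinianRing A]
    [AddCommGroup M] [Module A M] [Module.Finite A M] [IsSemisimpleModule A M]
    [Nontrivial M] :
    Function.Bijective (Module.toModuleEnd (Module.End A M) M (S := A)) := by
  classical
  have hinj : Function.Injective (Module.toModuleEnd (Module.End A M) M (S := A)) :=
    RingHom.injective _
  refine ⟨hinj, ?_⟩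
  -- faithfulness: if `a • m = 0` for all `m`, then `a = 0`
  have hfaith : ∀ a : A, (∀ m : M, a • m = 0) → a = 0 := by
    intro a ha
    have : (Module.toModuleEnd (Module.End A M) M (S := A)) a =
        (Module.toModuleEnd (Module.End A M) M (S := A)) 0 := by
      ext m
      simpa using ha m
    exact hinj this
  -- find a finite tuple in `M` with trivial common annihilator
  have key : ∃ (k : ℕ) (v : Fin k → M),
      LinearMap.ker (LinearMap.pi
        (fun i => LinearMap.toSpanSingleton A M (v i))) = ⊥ := by
    obtain ⟨I₀, ⟨⟨k, v, hv⟩, hmin⟩⟩ := IsArtinian.set_has_minimal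
      (R := A) (M := A)
      {I : Submodule A A | ∃ (k : ℕ) (v : Fin k → M),
        I = LinearMap.ker (LinearMap.pi
          (fun i => LinearMap.toSpanSingleton A M (v i)))}
      ⟨_, 0, (fun _ : Fin 0 => (0 : M)), rfl⟩
    refine ⟨k, v, ?_⟩
    rw [← hv]
    rw [eq_bot_iff]
    intro a haI
    refine (Submodule.mem_bot A).mpr (hfaith a fun m => ?_)
    -- extend the tuple by m; by minimality the kernel doesn't shrink
    set v' : Fin (k + 1) → M := Fin.snoc v m with hv'
    set I' : Submodule A A := LinearMap.ker (LinearMap.pi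
      (fun i => LinearMap.toSpanSingleton A M (v' i))) with hI'
    have hle : I' ≤ I₀ := by
      rw [hv]
      intro b hb
      rw [LinearMap.mem_ker] at hb ⊢
      funext i
      have := congrFun hb (Fin.castSucc i)
      simpa [v', LinearMap.pi_apply, Fin.snoc_castSucc] using this
    have hIeq : I' = I₀ := by
      rcases eq_or_lt_of_le hle with h | h
      · exact h
      · exact absurd h (hmin I' ⟨k + 1, v', rfl⟩)
    have haI' : a ∈ I' := hIeq ▸ haI
    rw [hI', LinearMap.mem_ker] at haI'
    have := congrFun haI' (Fin.last k)
    simpa [v', LinearMap.pi_apply, Fin.snoc_last] using this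
  obtain ⟨k, v, hker⟩ := key
  set f : A →ₗ[A] (Fin k → M) :=
    LinearMap.pi (fun i => LinearMap.toSpanSingleton A M (v i)) with hf
  have hfinj : Function.Injective f := LinearMap.ker_eq_bot.mp hker
  -- k cannot be zero since A is nontrivial
  have hk : k ≠ 0 := by
    rintro rfl
    have : (0 : A) = 1 := hfinj (by funext i; exact i.elim0)
    exact one_ne_zero this.symm
  have i0 : Fin k := ⟨0, Nat.pos_of_ne_zero hk⟩
  -- split the embedding using semisimplicity of M^k
  have hsemi : IsSemisimpleModule A (Fin k → M) := pi_semisimple k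
  obtain ⟨P, hP⟩ := exists_isCompl (LinearMap.range f)
  set pr : (Fin k → M) →ₗ[A] (LinearMap.range f) :=
    Submodule.linearProjOfIsCompl _ P hP with hpr
  set π : (Fin k → M) →ₗ[A] A :=
    ((LinearEquiv.ofInjective f hfinj).symm.toLinearMap) ∘ₗ pr with hπ
  have hπf : ∀ a : A, π (f a) = a := by
    intro a
    have h1 : pr (f a) = ⟨f a, LinearMap.mem_range_self f a⟩ :=
      Submodule.linearProjOfIsCompl_apply_left hP ⟨f a, LinearMap.mem_range_self f a⟩
    have h2 : (⟨f a, LinearMap.mem_range_self f a⟩ : LinearMap.range f) =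
        LinearEquiv.ofInjective f hfinj a := by
      rfl
    simp [π, h1, h2]
  -- the idempotent projection onto range f
  set e : (Fin k → M) →ₗ[A] (Fin k → M) := (LinearMap.range f).subtype ∘ₗ pr with he
  have hef : ∀ a : A, e (f a) = f a := by
    intro a
    simp [e]
    exact congrArg Subtype.val
      (Submodule.projectionOnto_apply_left hP ⟨f a, LinearMap.mem_range_self f a⟩)
  -- now the main argument
  intro g
  have hv1 : f 1 = v := by
    funext i
    simp [f, LinearMap.pi_apply, LinearMap.toSpanSingleton_apply]
  -- g applied componentwise to v stays in range f
  have hgv : (fun j => g (v j)) ∈ LinearMap.range f := by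
    have hcomm := key_comm g e v
    have hev : e v = v := by rw [← hv1]; exact hef 1
    have : (fun j => g (v j)) = e (fun j => g (v j)) := by
      funext i
      conv_lhs => rw [← hev]
      exact hcomm i
    rw [this, he]
    exact Submodule.coe_mem _
  obtain ⟨b, hb⟩ := hgv
  refine ⟨b, ?_⟩
  ext m
  -- the A-linear map ψ : M^k → M^k, x ↦ single i0 ((π x) • m)
  set ψ : (Fin k → M) →ₗ[A] (Fin k → M) :=
    (LinearMap.single A (fun _ : Fin k => M) i0) ∘ₗ
      (LinearMap.toSpanSingleton A M m) ∘ₗ π with hψ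
  have hcomm := key_comm g ψ v i0
  have hπv : π v = 1 := by rw [← hv1]; exact hπf 1
  have hlhs : (ψ v) i0 = m := by
    simp [ψ, hπv, LinearMap.coe_single, Pi.single_apply]
  have hrhs : (ψ (fun j => g (v j))) i0 = b • m := by
    rw [hψ]
    simp only [LinearMap.coe_comp, Function.comp_apply]
    rw [← hb, hπf b]
    simp [LinearMap.coe_single, Pi.single_apply]
  rw [hlhs, hrhs] at hcomm
  -- hcomm : g m = b • m
  simpa using hcomm.symm
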